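/- Let m ≥ 2 and n ≥ 4 be integers with m dividing n and n even. Then η(D_{2n} × C_m) ≥ 2m + n − 1. -/

import Mathlib

/-- A multiset `S` over a group is a *product-one sequence* if its terms can be
ordered so that their product is the identity. -/
def IsProductOne {G : Type*} [Group G] (S : Multiset G) : Prop :=
  ∃ l : List G, (l : Multiset G) = S ∧ l.prod = 1

/-- A multiset is *product-one free* if no nonempty sub-multiset is product-one. -/
def ProductOneFree {G : Type*} [Group G] (S : Multiset G) : Prop :=
  ∀ T : Multiset G, T ≤ S → T ≠ 0 → ¬ IsProductOne T

/-- The small Davenport constant `d(G)`. -/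
noncomputable def smallDavenport (G : Type*) [Group G] : ℕ :=
  sSup {k : ℕ | ∃ S : Multiset G, Multiset.card S = k ∧ ProductOneFree S}

/-- The `η`-constant of `G`. -/
noncomputable def etaConst (G : Type*) [Group G] : ℕ :=
  sInf {l : ℕ | ∀ S : Multiset G, l ≤ Multiset.card S →
    ∃ T, T ≤ S ∧ 1 ≤ Multiset.card T ∧ Multiset.card T ≤ Monoid.exponent G ∧ IsProductOne T}

open DihedralGroup Multiplicative

section EtaAux

/-- Sign homomorphism of the dihedral group. -/
private def dsgn {n : ℕ} : DihedralGroup n →* Multiplicative (ZMod 2) where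
  toFun x := match x with
    | .r _ => 1
    | .sr _ => Multiplicative.ofAdd 1
  map_one' := by rw [DihedralGroup.one_def]
  map_mul' := by
    rintro (a | a) (b | b) <;>
      simp only [DihedralGroup.r_mul_r, DihedralGroup.r_mul_sr,
        DihedralGroup.sr_mul_r, DihedralGroup.sr_mul_sr] <;> rfl

variable {n m : ℕ}

private abbrev GG (n m : ℕ) := DihedralGroup n × Multiplicative (ZMod m)

private def E1 : GG n m := (.r 1, 1)
private def E2 : GG n m := (.r 0, Multiplicative.ofAdd 1)
private def E3 : GG n m := (.r 1, Multiplicative.ofAdd 1)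
private def E4 : GG n m := (.sr 0, 1)

private def pSgn : GG n m →* Multiplicative (ZMod 2) :=
  dsgn.comp (MonoidHom.fst _ _)

private lemma parity (l : List (GG n m))
    (h : ∀ u ∈ l, u = E1 ∨ u = E2 ∨ u = E3 ∨ u = E4) :
    pSgn l.prod = Multiplicative.ofAdd ((l.count E4 : ZMod 2)) := by
  induction l with
  | nil => simp [List.count_nil]
  | cons a l ih =>
    have ha := h a List.mem_cons_self
    have hl := fun u hu => h u (List.mem_cons_of_mem a hu)
    rw [List.prod_cons, map_mul, ih hl]
    rcases ha with ha | ha | ha | ha <;> subst ha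
    · rw [List.count_cons_of_ne (by simp [E1, E4])]
      show (1 : Multiplicative (ZMod 2)) * _ = _
      rw [one_mul]
    · rw [List.count_cons_of_ne (by intro h; cases congrArg Prod.fst h)]
      show (1 : Multiplicative (ZMod 2)) * _ = _
      rw [one_mul]
    · rw [List.count_cons_of_ne (by simp [E3, E4])]
      show (1 : Multiplicative (ZMod 2)) * _ = _
      rw [one_mul]
    · rw [List.count_cons_self]
      show Multiplicative.ofAdd 1 * _ = _
      rw [← ofAdd_add]
      push_cast
      ring_nf

private lemma lenCount (hn : 2 ≤ n) (hm : 2 ≤ m) (l : List (GG n m))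
    (h : ∀ u ∈ l, u = E1 ∨ u = E2 ∨ u = E3 ∨ u = E4) :
    l.length = l.count E1 + l.count E2 + l.count E3 + l.count E4 := by
  haveI : Fact (1 < n) := ⟨by omega⟩
  haveI : Fact (1 < m) := ⟨by omega⟩
  have h12 : (E1 : GG n m) ≠ E2 := by
    intro h; have := congrArg Prod.snd h; simp only [E1, E2] at this
    exact one_ne_zero (ofAdd.injective this.symm)
  have h13 : (E1 : GG n m) ≠ E3 := by
    simp [E1, E3, ← ofAdd_zero, (one_ne_zero : (1 : ZMod m) ≠ 0).symm]
  have h14 : (E1 : GG n m) ≠ E4 := by simp [E1, E4]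
  have h23 : (E2 : GG n m) ≠ E3 := by
    intro h; have := congrArg Prod.fst h; simp only [E2, E3] at this
    exact zero_ne_one (DihedralGroup.r.inj this)
  have h24 : (E2 : GG n m) ≠ E4 := by simp [E2, E4]
  have h34 : (E3 : GG n m) ≠ E4 := by simp [E3, E4]
  induction l with
  | nil => simp
  | cons a l ih =>
    have ha := h a List.mem_cons_self
    have hl := fun u hu => h u (List.mem_cons_of_mem a hu)
    have ihl := ih hl
    rcases ha with ha | ha | ha | ha <;> subst ha <;>
      simp only [List.length_cons, List.count_cons_self,
        List.count_cons_of_ne, ihl, h12, h13, h14, h23, h24, h34,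
        h12.symm, h13.symm, h14.symm, h23.symm, h24.symm, h34.symm,
        ne_eq, not_false_eq_true] <;> omega

private lemma prodForm (hn : 2 ≤ n) (hm : 2 ≤ m) (l : List (GG n m))
    (h : ∀ u ∈ l, u = E1 ∨ u = E2 ∨ u = E3) :
    l.prod = (DihedralGroup.r ((l.count E1 + l.count E3 : ℕ) : ZMod n),
      Multiplicative.ofAdd ((l.count E2 + l.count E3 : ℕ) : ZMod m)) := by
  haveI : Fact (1 < n) := ⟨by omega⟩
  haveI : Fact (1 < m) := ⟨by omega⟩
  have h12 : (E1 : GG n m) ≠ E2 := by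
    intro h; have := congrArg Prod.snd h; simp only [E1, E2] at this
    exact one_ne_zero (ofAdd.injective this.symm)
  have h13 : (E1 : GG n m) ≠ E3 := by
    simp [E1, E3, ← ofAdd_zero, (one_ne_zero : (1 : ZMod m) ≠ 0).symm]
  have h23 : (E2 : GG n m) ≠ E3 := by
    intro h; have := congrArg Prod.fst h; simp only [E2, E3] at this
    exact zero_ne_one (DihedralGroup.r.inj this)
  induction l with
  | nil =>
    simp only [List.prod_nil, List.count_nil]
    rw [Prod.ext_iff]
    constructor
    · show (1 : DihedralGroup n) = _; rw [DihedralGroup.one_def]; norm_num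
    · show (1 : Multiplicative (ZMod m)) = _; rw [← ofAdd_zero]; norm_num
  | cons a l ih =>
    have ha := h a List.mem_cons_self
    have hl := fun u hu => h u (List.mem_cons_of_mem a hu)
    rw [List.prod_cons, ih hl]
    rcases ha with ha | ha | ha <;> subst ha
    · rw [List.count_cons_self, List.count_cons_of_ne h12,
        List.count_cons_of_ne h13]
      show (DihedralGroup.r 1, (1 : Multiplicative (ZMod m))) * _ = _
      rw [Prod.mk_mul_mk, DihedralGroup.r_mul_r, one_mul]
      congr 1
      push_cast
      ring
    · rw [List.count_cons_of_ne h12.symm, List.count_cons_self,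
        List.count_cons_of_ne h23]
      show (DihedralGroup.r 0, Multiplicative.ofAdd (1 : ZMod m)) * _ = _
      rw [Prod.mk_mul_mk, DihedralGroup.r_mul_r, zero_add, ← ofAdd_add]
      congr 1
      push_cast
      ring
    · rw [List.count_cons_of_ne h13.symm,
        List.count_cons_of_ne h23.symm, List.count_cons_self]
      show (DihedralGroup.r 1, Multiplicative.ofAdd (1 : ZMod m)) * _ = _
      rw [Prod.mk_mul_mk, DihedralGroup.r_mul_r, ← ofAdd_add]
      rw [Prod.ext_iff]
      constructor
      · simp only [DihedralGroup.r.injEq]; push_cast; ring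
      · rw [Equiv.apply_eq_iff_eq]; push_cast; ring

end EtaAux

section Main

variable {n m : ℕ}

private def SS (n m : ℕ) : Multiset (GG n m) :=
  Multiset.replicate (n - 1) E1 + Multiset.replicate (m - 1) E2 +
    Multiset.replicate (m - 1) E3 + {E4}

private lemma count_bridge (e : GG n m) (l : List (GG n m)) :
    Multiset.count e (↑l : Multiset (GG n m)) = l.count e := by
  induction l with
  | nil => simp
  | cons a l ih =>
    rw [← Multiset.cons_coe, Multiset.count_cons, ih, List.count_cons]
    simp only [beq_iff_eq]
    by_cases h : a = e
    · subst h; simp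
    · rw [if_neg (fun hh => h hh.symm), if_neg h]

private lemma free (hm : 2 ≤ m) (hn : 4 ≤ n) (hdvd : m ∣ n)
    (T : Multiset (GG n m)) (hTle : T ≤ SS n m) (hT0 : T ≠ 0)
    (hTcard : Multiset.card T ≤ n) : ¬ IsProductOne T := by
  rintro ⟨l, hl, hp⟩
  haveI : Fact (1 < n) := ⟨by omega⟩
  haveI : Fact (1 < m) := ⟨by omega⟩
  have h12 : (E1 : GG n m) ≠ E2 := by
    intro h; have := congrArg Prod.snd h; simp only [E1, E2] at this
    exact one_ne_zero (ofAdd.injective this.symm)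
  have h13 : (E1 : GG n m) ≠ E3 := by
    simp [E1, E3, ← ofAdd_zero, (one_ne_zero : (1 : ZMod m) ≠ 0).symm]
  have h14 : (E1 : GG n m) ≠ E4 := by simp [E1, E4]
  have h23 : (E2 : GG n m) ≠ E3 := by
    intro h; have := congrArg Prod.fst h; simp only [E2, E3] at this
    exact zero_ne_one (DihedralGroup.r.inj this)
  have h24 : (E2 : GG n m) ≠ E4 := by simp [E2, E4]
  have h34 : (E3 : GG n m) ≠ E4 := by simp [E3, E4]
  have hmem : ∀ u ∈ l, u = E1 ∨ u = E2 ∨ u = E3 ∨ u = E4 := by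
    intro u hu
    have hu' : u ∈ SS n m := Multiset.mem_of_le hTle
      (by rw [← hl]; exact Multiset.mem_coe.mpr hu)
    simp only [SS, Multiset.mem_add, Multiset.mem_replicate,
      Multiset.mem_singleton] at hu'
    tauto
  -- counts in `l` are bounded by counts in `SS`
  have hcount : ∀ e : GG n m, l.count e ≤ (SS n m).count e := by
    intro e
    have h1 := Multiset.count_le_of_le e hTle
    rw [← hl, count_bridge] at h1
    exact h1
  have hc1 : (SS n m).count E1 = n - 1 := by
    simp [SS, Multiset.count_replicate, Multiset.count_singleton, h12, h13, h14, h23, h24, h34, h12.symm, h13.symm, h14.symm, h23.symm, h24.symm, h34.symm]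
  have hc2 : (SS n m).count E2 = m - 1 := by
    simp [SS, Multiset.count_replicate, Multiset.count_singleton, h12, h13, h14, h23, h24, h34, h12.symm, h13.symm, h14.symm, h23.symm, h24.symm, h34.symm]
  have hc3 : (SS n m).count E3 = m - 1 := by
    simp [SS, Multiset.count_replicate, Multiset.count_singleton, h12, h13, h14, h23, h24, h34, h12.symm, h13.symm, h14.symm, h23.symm, h24.symm, h34.symm]
  have hc4 : (SS n m).count E4 = 1 := by
    simp [SS, Multiset.count_replicate, Multiset.count_singleton, h12, h13, h14, h23, h24, h34, h12.symm, h13.symm, h14.symm, h23.symm, h24.symm, h34.symm]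
  have hx : l.count E1 ≤ n - 1 := hc1 ▸ hcount E1
  have hy : l.count E2 ≤ m - 1 := hc2 ▸ hcount E2
  have hz : l.count E3 ≤ m - 1 := hc3 ▸ hcount E3
  have hw : l.count E4 ≤ 1 := hc4 ▸ hcount E4
  -- parity forces no `E4`
  have hpar := parity l hmem
  rw [hp, map_one] at hpar
  have hz2 : ((l.count E4 : ZMod 2)) = 0 := by
    have h' : Multiplicative.ofAdd ((l.count E4 : ZMod 2))
        = Multiplicative.ofAdd (0 : ZMod 2) := hpar.symm
    exact (Equiv.apply_eq_iff_eq _).mp h'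
  have hw2 : 2 ∣ l.count E4 := (ZMod.natCast_eq_zero_iff _ 2).mp hz2
  have hw0 : l.count E4 = 0 := by omega
  have hmem3 : ∀ u ∈ l, u = E1 ∨ u = E2 ∨ u = E3 := by
    intro u hu
    rcases hmem u hu with h | h | h | h
    · tauto
    · tauto
    · tauto
    · exact absurd (List.count_pos_iff.mpr (h ▸ hu)) (by omega)
  have hform := prodForm (by omega) hm l hmem3
  rw [hp] at hform
  have h1 : ((l.count E1 + l.count E3 : ℕ) : ZMod n) = 0 := by
    have h1' : (1 : DihedralGroup n)
        = DihedralGroup.r ((l.count E1 + l.count E3 : ℕ) : ZMod n) :=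
      congrArg Prod.fst hform
    rw [DihedralGroup.one_def] at h1'
    exact (DihedralGroup.r.inj h1').symm
  have h2 : ((l.count E2 + l.count E3 : ℕ) : ZMod m) = 0 := by
    have h2' : Multiplicative.ofAdd (0 : ZMod m)
        = Multiplicative.ofAdd (((l.count E2 + l.count E3 : ℕ) : ZMod m)) :=
      congrArg Prod.snd hform
    exact ((Equiv.apply_eq_iff_eq _).mp h2').symm
  have hdn : n ∣ l.count E1 + l.count E3 := (ZMod.natCast_eq_zero_iff _ n).mp h1
  have hdm : m ∣ l.count E2 + l.count E3 := (ZMod.natCast_eq_zero_iff _ m).mp h2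
  have hlen := lenCount (by omega) hm l hmem
  have hcardT : Multiset.card T = l.length := by rw [← hl]; simp
  have hTpos : 0 < Multiset.card T := Multiset.card_pos.mpr hT0
  have hmn : m ≤ n := Nat.le_of_dvd (by omega) hdvd
  obtain ⟨k, hk⟩ := hdn
  obtain ⟨j, hj⟩ := hdm
  have hk1 : k ≤ 1 := by
    by_contra hc
    push_neg at hc
    have h2n : n * 2 ≤ n * k := Nat.mul_le_mul_left n (by omega)
    have hb : l.count E1 + l.count E3 ≤ (n - 1) + (m - 1) := Nat.add_le_add hx hz
    rw [hk] at hb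
    omega
  have hj1 : j ≤ 1 := by
    by_contra hc
    push_neg at hc
    have h2m : m * 2 ≤ m * j := Nat.mul_le_mul_left m (by omega)
    have hb : l.count E2 + l.count E3 ≤ (m - 1) + (m - 1) := Nat.add_le_add hy hz
    rw [hj] at hb
    omega
  interval_cases k <;> interval_cases j <;> omega

end Main

theorem stmt_5 (m n : ℕ) (hm : 2 ≤ m) (hn : 4 ≤ n) (hdvd : m ∣ n) (hev : Even n) :
    2 * m + n - 1 ≤ etaConst (DihedralGroup n × Multiplicative (ZMod m)) := by
  haveI : NeZero n := ⟨by omega⟩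
  haveI : NeZero m := ⟨by omega⟩
  have hpow : ∀ g : GG n m, g ^ n = 1 := by
    rintro ⟨d, c⟩
    have h1 : d ^ n = 1 := by
      rw [← orderOf_dvd_iff_pow_eq_one]
      rcases d with i | i
      · rw [DihedralGroup.orderOf_r]
        exact Nat.div_dvd_of_dvd (Nat.gcd_dvd_left n i.val)
      · rw [DihedralGroup.orderOf_sr]
        exact hev.two_dvd
    have h2 : c ^ n = 1 := by
      have h2' : (c ^ n).toAdd = (0 : ZMod m) := by
        rw [toAdd_pow, nsmul_eq_mul, (ZMod.natCast_eq_zero_iff n m).mpr hdvd,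
          zero_mul]
      exact Multiplicative.toAdd.injective (by rw [h2']; rfl)
    have hmk : ((d, c) : GG n m) ^ n = (d ^ n, c ^ n) := rfl
    rw [hmk, h1, h2]
    rfl
  have hexp_dvd : Monoid.exponent (GG n m) ∣ n :=
    Monoid.exponent_dvd_of_forall_pow_eq_one hpow
  have hexp_le : Monoid.exponent (GG n m) ≤ n := Nat.le_of_dvd (by omega) hexp_dvd
  have hexp_pos : 0 < Monoid.exponent (GG n m) := by
    rcases Nat.eq_zero_or_pos (Monoid.exponent (GG n m)) with h | h
    · rw [h] at hexp_dvd
      have := Nat.eq_zero_of_zero_dvd hexp_dvd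
      omega
    · exact h
  have hmemL : ∀ S : Multiset (GG n m),
      Fintype.card (GG n m) * Monoid.exponent (GG n m) ≤ Multiset.card S →
      ∃ T, T ≤ S ∧ 1 ≤ Multiset.card T ∧
        Multiset.card T ≤ Monoid.exponent (GG n m) ∧ IsProductOne T := by
    intro S hS
    have hg : ∃ g : GG n m, Monoid.exponent (GG n m) ≤ S.count g := by
      by_contra hc
      push_neg at hc
      have h1 : Multiset.card S = ∑ a ∈ S.toFinset, S.count a :=
        (Multiset.toFinset_sum_count_eq S).symm
      have h2 : ∑ a ∈ S.toFinset, S.count a ≤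
          S.toFinset.card * (Monoid.exponent (GG n m) - 1) := by
        have := Finset.sum_le_card_nsmul S.toFinset (fun a => S.count a)
          (Monoid.exponent (GG n m) - 1) (fun a _ => by
            show Multiset.count a S ≤ Monoid.exponent (GG n m) - 1
            have := hc a; omega)
        simpa [smul_eq_mul] using this
      have h3 : S.toFinset.card ≤ Fintype.card (GG n m) := by
        simpa using Finset.card_le_card (Finset.subset_univ S.toFinset)
      have h4 : S.toFinset.card * (Monoid.exponent (GG n m) - 1) ≤
          Fintype.card (GG n m) * (Monoid.exponent (GG n m) - 1) :=
        Nat.mul_le_mul_right _ h3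
      have h5 : Fintype.card (GG n m) * (Monoid.exponent (GG n m) - 1) <
          Fintype.card (GG n m) * Monoid.exponent (GG n m) :=
        Nat.mul_lt_mul_of_le_of_lt (le_refl _) (by omega) Fintype.card_pos
      have h6 : Multiset.card S < Fintype.card (GG n m) * Monoid.exponent (GG n m) := by
        rw [h1]
        exact lt_of_le_of_lt (le_trans h2 h4) h5
      exact absurd hS (not_le.mpr h6)
    obtain ⟨g, hg⟩ := hg
    have hord_pos : 0 < orderOf g := orderOf_pos g
    have hord_le : orderOf g ≤ Monoid.exponent (GG n m) :=
      Nat.le_of_dvd hexp_pos (Monoid.order_dvd_exponent g)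
    refine ⟨Multiset.replicate (orderOf g) g, ?_, ?_, ?_, ?_⟩
    · exact Multiset.le_count_iff_replicate_le.mp (le_trans hord_le hg)
    · rw [Multiset.card_replicate]; omega
    · rw [Multiset.card_replicate]; exact hord_le
    · exact ⟨List.replicate (orderOf g) g, Multiset.coe_replicate _ _,
        by rw [List.prod_replicate, pow_orderOf_eq_one]⟩
  rw [etaConst]
  refine le_csInf ⟨_, hmemL⟩ ?_
  intro b hb
  by_contra hlt
  push_neg at hlt
  have hcard : Multiset.card (SS n m) = n + 2 * m - 2 := by
    simp [SS]
    omega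
  obtain ⟨T, hTle, hT1, hTexp, hTpo⟩ := hb (SS n m) (by omega)
  exact free hm (by omega) hdvd T hTle
    (Multiset.card_pos.mp (by omega)) (le_trans hTexp hexp_le) hTpo
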